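/- Define the polynomials d₂(m₁,m₂) = m₁² + m₁m₂ + m₂² + 3m₁ + 3m₂ and d₃(m₁,m₂) = (1/9)(m₁ + 2m₂)(6 + 2m₁ + m₂)(m₁ − m₂ − 3). Let u_1,…,u_k ∈ ℂ[x,y]^n be vectors of polynomials such that for all sufficiently large integers m₁ and m₂ the evaluated vectors u_i(d₂(m₁,m₂), d₃(m₁,m₂)) ∈ ℂⁿ, i = 1,…,k, are linearly dependent over ℂ. Then u_1,…,u_k are linearly dependent over the ring ℂ[x,y]. -/

import Mathlib

/-- The eigenvalue of the quadratic Casimir generator on the irreducible representation of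
`𝔰𝔩₃` with highest weight `(m₁, m₂)`. -/
noncomputable def casimirD2 (m₁ m₂ : ℂ) : ℂ :=
  m₁ ^ 2 + m₁ * m₂ + m₂ ^ 2 + 3 * m₁ + 3 * m₂

/-- The eigenvalue of the cubic Casimir generator on the irreducible representation of
`𝔰𝔩₃` with highest weight `(m₁, m₂)`. -/
noncomputable def casimirD3 (m₁ m₂ : ℂ) : ℂ :=
  (1 / 9) * (m₁ + 2 * m₂) * (6 + 2 * m₁ + m₂) * (m₁ - m₂ - 3)

open Polynomial in
/-- The map `(m₁, m₂) ↦ (d₂, d₃)` is surjective onto `ℂ²`. -/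
lemma casimir_surjective (a b : ℂ) :
    ∃ z₁ z₂ : ℂ, casimirD2 z₁ z₂ = a ∧ casimirD3 z₁ z₂ = b := by
  obtain ⟨p, hp⟩ := Complex.exists_root
    (f := C 1 * X ^ 3 + C 18 * X ^ 2 + C (99 - 3 * a) * X + C (162 - 27 * a - 9 * b))
    (by rw [Polynomial.degree_cubic one_ne_zero]; norm_num)
  have hp' : p ^ 3 + 18 * p ^ 2 + (99 - 3 * a) * p + (162 - 27 * a - 9 * b) = 0 := by
    simpa [Polynomial.IsRoot] using hp
  obtain ⟨r, hr⟩ := Complex.exists_root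
    (f := C 1 * X ^ 2 + C (-p) * X + C (p ^ 2 + 9 * p + 18 - 3 * a))
    (by rw [Polynomial.degree_quadratic one_ne_zero]; norm_num)
  have hr' : r ^ 2 - p * r + (p ^ 2 + 9 * p + 18 - 3 * a) = 0 := by
    have := hr; simp [Polynomial.IsRoot] at this; linear_combination this
  refine ⟨(r + 2 * (p - r) + 6) / 3, (r - (p - r) - 3) / 3, ?_, ?_⟩
  · unfold casimirD2; linear_combination (1 / 3 : ℂ) * hr'
  · unfold casimirD3; linear_combination (1 / 9 : ℂ) * hp' - ((p + 9) / 9) * hr'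

open MvPolynomial

lemma cast_grid_infinite (M : ℤ) : ((fun m : ℤ => (m : ℂ)) '' Set.Ici M).Infinite :=
  (Set.Ici_infinite M).image (Set.injOn_of_injective (fun x y hxy => by exact_mod_cast hxy))

lemma poly_zero_of_grid (M : ℤ) (pb : Polynomial ℂ)
    (h : ∀ m : ℤ, M ≤ m → pb.eval (m : ℂ) = 0) : pb = 0 := by
  apply Polynomial.eq_zero_of_infinite_isRoot
  apply Set.Infinite.mono (s := (fun m : ℤ => (m : ℂ)) '' Set.Ici M)
  · rintro x ⟨m, hm, rfl⟩
    exact h m hm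
  · exact cast_grid_infinite M

/-- A polynomial in two variables vanishing on a grid of large integers is zero. -/
lemma mv_zero_of_grid (M : ℤ) (Q : MvPolynomial (Fin 2) ℂ)
    (h : ∀ m₁ m₂ : ℤ, M ≤ m₁ → M ≤ m₂ → eval ![(m₁ : ℂ), (m₂ : ℂ)] Q = 0) : Q = 0 := by
  set Q' := finSuccEquiv ℂ 1 Q with hQ'
  have step1 : ∀ i, ∀ m₂ : ℤ, M ≤ m₂ → eval ![(m₂ : ℂ)] (Q'.coeff i) = 0 := by
    intro i m₂ hm₂
    have hpb : Polynomial.map (eval ![(m₂ : ℂ)]) Q' = 0 := by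
      apply poly_zero_of_grid M
      intro m₁ hm₁
      have := eval_eq_eval_mv_eval' (R := ℂ) ![(m₂ : ℂ)] (m₁ : ℂ) Q
      have h2 : eval (Fin.cons (m₁ : ℂ) ![(m₂ : ℂ)]) Q = 0 := h m₁ m₂ hm₁ hm₂
      rw [this] at h2
      exact h2
    have := congrArg (fun p => Polynomial.coeff p i) hpb
    simpa [Polynomial.coeff_map] using this
  have step2 : ∀ i, Q'.coeff i = 0 := by
    intro i
    set R := Q'.coeff i with hR
    set R' := finSuccEquiv ℂ 0 R with hR'
    have hpc : Polynomial.map (eval (![] : Fin 0 → ℂ)) R' = 0 := by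
      apply poly_zero_of_grid M
      intro m hm
      have := eval_eq_eval_mv_eval' (R := ℂ) (![] : Fin 0 → ℂ) (m : ℂ) R
      have h2 : eval (Fin.cons (m : ℂ) ![]) R = 0 := step1 i m hm
      rw [this] at h2
      exact h2
    have hcoe : ∀ j, R'.coeff j = 0 := by
      intro j
      have := congrArg (fun p => Polynomial.coeff p j) hpc
      simp only [Polynomial.coeff_map, Polynomial.coeff_zero] at this
      apply MvPolynomial.funext
      intro x
      rw [Subsingleton.elim x (![] : Fin 0 → ℂ)]
      simpa using this
    have : R' = 0 := Polynomial.ext fun j => by simp [hcoe j]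
    have hz : (finSuccEquiv ℂ 0) R = (finSuccEquiv ℂ 0) 0 := by
      rw [← hR', this, map_zero]
    exact (finSuccEquiv ℂ 0).injective hz
  have : Q' = 0 := Polynomial.ext fun i => by simp [step2 i]
  have hz : (finSuccEquiv ℂ 1) Q = (finSuccEquiv ℂ 1) 0 := by
    rw [← hQ', this, map_zero]
  exact (finSuccEquiv ℂ 1).injective hz

open Matrix Module in
/-- Linearly independent rows of a rectangular matrix over a field admit a nonvanishing
`k × k` minor. -/
lemma exists_nonzero_minor {K : Type*} [Field K] {k n : ℕ} (B : Matrix (Fin k) (Fin n) K)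
    (hB : LinearIndependent K (fun i => B i)) :
    ∃ f : Fin k → Fin n, (B.submatrix id f).det ≠ 0 := by
  classical
  have hrank : B.rank = k := by simpa using hB.rank_matrix
  have hspan : Submodule.span K (Set.range Bᵀ) = ⊤ := by
    apply Submodule.eq_top_of_finrank_eq
    rw [show Set.range Bᵀ = Set.range B.col from rfl, ← Matrix.rank_eq_finrank_span_cols, hrank, finrank_pi]
    simp
  obtain ⟨t, hts, hspan2, hli⟩ := exists_linearIndependent K (Set.range Bᵀ)
  have htfin : t.Finite := hli.setFinite
  haveI : Fintype t := htfin.fintype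
  have hcard : Fintype.card t = k := by
    have h1 : finrank K (Submodule.span K t) = t.toFinset.card :=
      finrank_span_set_eq_card hli
    rw [hspan2, hspan, Set.toFinset_card] at h1
    rw [← h1, finrank_top, finrank_pi]
    simp
  let e : Fin k ≃ t := (Fintype.equivFinOfCardEq hcard).symm
  have hchoice : ∀ x : t, ∃ j : Fin n, Bᵀ j = x.1 := fun x => hts x.2
  choose g hg using hchoice
  refine ⟨fun i => g (e i), ?_⟩
  have hli2 : LinearIndependent K (fun i : Fin k => ((B.submatrix id fun i => g (e i))ᵀ i)) := by
    have : (fun i : Fin k => ((B.submatrix id fun i => g (e i))ᵀ i))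
        = (fun x : t => x.1) ∘ e := by
      funext i
      ext i'
      have := congrFun (hg (e i)) i'
      simpa [Matrix.submatrix, Matrix.transpose] using this
    rw [this]
    exact hli.comp e e.injective
  have hunit := (Matrix.linearIndependent_cols_iff_isUnit (K := K)).1 hli2
  intro h0
  rw [Matrix.isUnit_iff_isUnit_det, h0] at hunit
  exact hunit.ne_zero rfl

/-- The quadratic Casimir eigenvalue, as a polynomial. -/
noncomputable def casP2 : MvPolynomial (Fin 2) ℂ :=
  X 0 ^ 2 + X 0 * X 1 + X 1 ^ 2 + 3 * X 0 + 3 * X 1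

/-- The cubic Casimir eigenvalue, as a polynomial. -/
noncomputable def casP3 : MvPolynomial (Fin 2) ℂ :=
  C (1 / 9) * (X 0 + 2 * X 1) * (6 + 2 * X 0 + X 1) * (X 0 - X 1 - 3)

lemma eval_casP2 (z : Fin 2 → ℂ) : eval z casP2 = casimirD2 (z 0) (z 1) := by
  simp [casP2, casimirD2]

lemma eval_casP3 (z : Fin 2 → ℂ) : eval z casP3 = casimirD3 (z 0) (z 1) := by
  simp [casP3, casimirD3]

lemma eval_comp (D : MvPolynomial (Fin 2) ℂ) (z : Fin 2 → ℂ) :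
    eval z (aeval ![casP2, casP3] D) =
      eval ![casimirD2 (z 0) (z 1), casimirD3 (z 0) (z 1)] D := by
  rw [aeval_def, algebraMap_eq, ← eval_assoc]
  have : (⇑(eval z) ∘ ![casP2, casP3]) = ![casimirD2 (z 0) (z 1), casimirD3 (z 0) (z 1)] := by
    funext i
    fin_cases i <;> simp [eval_casP2, eval_casP3]
  rw [this]

/-- vectors of polynomials in two variables whose evaluations at the points
`(d₂(m₁,m₂), d₃(m₁,m₂))` are linearly dependent over ℂ for all sufficiently large integers
`m₁, m₂` are linearly dependent over `ℂ[x,y]`. -/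
theorem stmt_17 (k n : ℕ) (u : Fin k → Fin n → MvPolynomial (Fin 2) ℂ)
    (h : ∃ M : ℤ, ∀ m₁ m₂ : ℤ, M ≤ m₁ → M ≤ m₂ →
      ¬ LinearIndependent ℂ (fun i : Fin k => fun j : Fin n =>
        MvPolynomial.eval ![casimirD2 (m₁ : ℂ) (m₂ : ℂ), casimirD3 (m₁ : ℂ) (m₂ : ℂ)] (u i j))) :
    ¬ LinearIndependent (MvPolynomial (Fin 2) ℂ) u := by
  classical
  obtain ⟨M, hM⟩ := h
  intro hLI
  let Rg := MvPolynomial (Fin 2) ℂ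
  let K := FractionRing Rg
  let φ : Rg →+* K := algebraMap Rg K
  have hφ : Function.Injective φ := IsFractionRing.injective Rg K
  let ψ : (Fin n → Rg) →ₗ[Rg] (Fin n → K) := (Algebra.linearMap Rg K).compLeft (Fin n)
  have hψinj : Function.Injective ψ := by
    intro x y hxy
    funext j
    exact hφ (congrFun hxy j)
  have h1 : LinearIndependent Rg (⇑ψ ∘ u) :=
    hLI.map' ψ (LinearMap.ker_eq_bot.2 hψinj)
  have h2 : LinearIndependent K (⇑ψ ∘ u) :=
    (LinearIndependent.iff_fractionRing Rg K).mp h1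
  let B : Matrix (Fin k) (Fin n) K := Matrix.of fun i j => φ (u i j)
  have h2' : LinearIndependent K (fun i => B i) := h2
  obtain ⟨f, hdet⟩ := exists_nonzero_minor B h2'
  set D : Rg := (Matrix.of fun i i' => u i (f i')).det with hDdef
  have hD : D ≠ 0 := by
    intro h0
    apply hdet
    have : φ D = 0 := by rw [h0, map_zero]
    rw [hDdef, RingHom.map_det] at this
    exact this
  -- the evaluations of `D` vanish at all grid points
  have hvan : ∀ m₁ m₂ : ℤ, M ≤ m₁ → M ≤ m₂ →
      eval ![casimirD2 (m₁ : ℂ) (m₂ : ℂ), casimirD3 (m₁ : ℂ) (m₂ : ℂ)] D = 0 := by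
    intro m₁ m₂ hm₁ hm₂
    by_contra hne
    apply hM m₁ m₂ hm₁ hm₂
    set pt : Fin 2 → ℂ := ![casimirD2 (m₁ : ℂ) (m₂ : ℂ), casimirD3 (m₁ : ℂ) (m₂ : ℂ)]
    let E : Matrix (Fin k) (Fin k) ℂ := Matrix.of fun i i' => eval pt (u i (f i'))
    have hEdet : E.det ≠ 0 := by
      have : eval pt D = E.det := by rw [hDdef, RingHom.map_det]; rfl
      rw [← this]
      exact hne
    have hErows : LinearIndependent ℂ (fun i => E i) :=
      Matrix.linearIndependent_rows_iff_isUnit.2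
        ((Matrix.isUnit_iff_isUnit_det E).2 (isUnit_iff_ne_zero.2 hEdet))
    have hcomp : LinearIndependent ℂ
        ((LinearMap.funLeft ℂ ℂ f) ∘ fun i j => eval pt (u i j)) := hErows
    exact LinearIndependent.of_comp (LinearMap.funLeft ℂ ℂ f) hcomp
  -- hence the composed polynomial vanishes identically
  have hQ : aeval ![casP2, casP3] D = 0 := by
    apply mv_zero_of_grid M
    intro m₁ m₂ hm₁ hm₂
    rw [eval_comp]
    simpa using hvan m₁ m₂ hm₁ hm₂
  -- by surjectivity, `D` vanishes at every point of `ℂ²`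
  have hall : ∀ x : Fin 2 → ℂ, eval x D = 0 := by
    intro x
    obtain ⟨z₁, z₂, hz2, hz3⟩ := casimir_surjective (x 0) (x 1)
    have hc := eval_comp D ![z₁, z₂]
    rw [hQ, map_zero] at hc
    have hx : x = ![x 0, x 1] := by funext i; fin_cases i <;> rfl
    rw [hx, ← hz2, ← hz3]
    simpa using hc.symm
  exact hD (MvPolynomial.funext fun x => by simpa using hall x)
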